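/- Let n ≥ 3 and let u₀, u_n ∈ ℝ² be points with 0 < |u₀u_n| < n. Then there exist infinitely many tuples (u₀, u₁, …, u_n) of points in ℝ² forming a unit-distance path (|u_i u_{i+1}| = 1 for all 0 ≤ i ≤ n−1) with all n+1 points pairwise distinct, such that moreover for each index i the point u_i differs across the different tuples (for 1 ≤ i ≤ n−1), |u₀u_i| = i for 0 ≤ i ≤ ⌊n/2⌋, and |u_n u_i| = n − i for ⌊n/2⌋+1 ≤ i ≤ n. -/

import Mathlib

namespace UPaths
noncomputable section

/-- Squared distance in the plane `ℝ × ℝ`. -/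
def sqd (P Q : ℝ × ℝ) : ℝ := (P.1 - Q.1)^2 + (P.2 - Q.2)^2

lemma sqd_eq_zero {P Q : ℝ × ℝ} (h : sqd P Q = 0) : P = Q := by
  unfold sqd at h
  have h1 : P.1 = Q.1 := by nlinarith [sq_nonneg (P.1 - Q.1), sq_nonneg (P.2 - Q.2)]
  have h2 : P.2 = Q.2 := by nlinarith [sq_nonneg (P.1 - Q.1), sq_nonneg (P.2 - Q.2)]
  exact Prod.ext h1 h2

set_option maxHeartbeats 1000000 in
/-- Scalar version of the three-point lemma. -/
lemma three_point_aux {a1 a2 c1 c2 x1 y1 x2 y2 x3 y3 : ℝ}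
    (hAC : ¬ (a1 = c1 ∧ a2 = c2)) (h12 : ¬ (x1 = x2 ∧ y1 = y2))
    (hA2 : (x1-a1)^2 + (y1-a2)^2 = (x2-a1)^2 + (y2-a2)^2)
    (hA3 : (x1-a1)^2 + (y1-a2)^2 = (x3-a1)^2 + (y3-a2)^2)
    (hC2 : (x1-c1)^2 + (y1-c2)^2 = (x2-c1)^2 + (y2-c2)^2)
    (hC3 : (x1-c1)^2 + (y1-c2)^2 = (x3-c1)^2 + (y3-c2)^2) :
    (x3 = x1 ∧ y3 = y1) ∨ (x3 = x2 ∧ y3 = y2) := by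
  have hD : a1 - c1 ≠ 0 ∨ a2 - c2 ≠ 0 := by
    by_contra h
    push_neg at h
    exact hAC ⟨by linarith [h.1], by linarith [h.2]⟩
  have l1 : (x1 - x2) * (a1 - c1) + (y1 - y2) * (a2 - c2) = 0 := by
    linear_combination (hC2 - hA2) / 2
  have l2 : (x1 - x3) * (a1 - c1) + (y1 - y3) * (a2 - c2) = 0 := by
    linear_combination (hC3 - hA3) / 2
  have hcross : (x2 - x1) * (y3 - y1) - (y2 - y1) * (x3 - x1) = 0 := by
    rcases hD with hD | hD
    · have h' : ((x2 - x1) * (y3 - y1) - (y2 - y1) * (x3 - x1)) * (a1 - c1) = 0 := by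
        linear_combination (y2 - y1) * l2 - (y3 - y1) * l1
      exact (mul_eq_zero.mp h').resolve_right hD
    · have h' : ((x2 - x1) * (y3 - y1) - (y2 - y1) * (x3 - x1)) * (a2 - c2) = 0 := by
        linear_combination (x3 - x1) * l1 - (x2 - x1) * l2
      exact (mul_eq_zero.mp h').resolve_right hD
  have hvne : (x2 - x1)^2 + (y2 - y1)^2 ≠ 0 := by
    intro h
    exact h12 ⟨by nlinarith [sq_nonneg (x2-x1), sq_nonneg (y2-y1)],
      by nlinarith [sq_nonneg (x2-x1), sq_nonneg (y2-y1)]⟩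
  have hw1 : ((x2-x1)^2 + (y2-y1)^2) * (x3 - x1)
      = ((x3-x1)*(x2-x1) + (y3-y1)*(y2-y1)) * (x2 - x1) := by
    linear_combination (-(y2 - y1)) * hcross
  have hw2 : ((x2-x1)^2 + (y2-y1)^2) * (y3 - y1)
      = ((x3-x1)*(x2-x1) + (y3-y1)*(y2-y1)) * (y2 - y1) := by
    linear_combination (x2 - x1) * hcross
  have eA : (x2-x1)^2 + (y2-y1)^2 + 2*((x2-x1)*(x1-a1) + (y2-y1)*(y1-a2)) = 0 := by
    linear_combination -hA2
  have eA3 : (x3-x1)^2 + (y3-y1)^2 + 2*((x3-x1)*(x1-a1) + (y3-y1)*(y1-a2)) = 0 := by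
    linear_combination -hA3
  have hnorm : ((x2-x1)^2 + (y2-y1)^2) * ((x3-x1)^2 + (y3-y1)^2)
      = ((x3-x1)*(x2-x1) + (y3-y1)*(y2-y1))^2 := by
    linear_combination (x3-x1) * hw1 + (y3-y1) * hw2
  have hdot : ((x2-x1)^2 + (y2-y1)^2) * ((x3-x1)*(x1-a1) + (y3-y1)*(y1-a2))
      = ((x3-x1)*(x2-x1) + (y3-y1)*(y2-y1)) * ((x2-x1)*(x1-a1) + (y2-y1)*(y1-a2)) := by
    linear_combination (x1-a1) * hw1 + (y1-a2) * hw2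
  have hkey : ((x3-x1)*(x2-x1) + (y3-y1)*(y2-y1))
      * (((x3-x1)*(x2-x1) + (y3-y1)*(y2-y1)) - ((x2-x1)^2 + (y2-y1)^2)) = 0 := by
    linear_combination ((x2-x1)^2 + (y2-y1)^2) * eA3 - hnorm - 2 * hdot
      - ((x3-x1)*(x2-x1) + (y3-y1)*(y2-y1)) * eA
  rcases mul_eq_zero.mp hkey with hq0 | hqS
  · left
    have h0 : ((x2-x1)^2 + (y2-y1)^2) * ((x3-x1)^2 + (y3-y1)^2) = 0 := by
      rw [hnorm, hq0]; ring
    have hz : (x3-x1)^2 + (y3-y1)^2 = 0 := (mul_eq_zero.mp h0).resolve_left hvne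
    have s1 := sq_nonneg (x3-x1)
    have s2 := sq_nonneg (y3-y1)
    have hx : (x3-x1)^2 = 0 := by linarith
    have hy : (y3-y1)^2 = 0 := by linarith
    have hx' : x3 - x1 = 0 := by
      exact pow_eq_zero_iff (two_ne_zero) |>.mp hx
    have hy' : y3 - y1 = 0 := by
      exact pow_eq_zero_iff (two_ne_zero) |>.mp hy
    exact ⟨by linarith, by linarith⟩
  · have hqS' : (x3-x1)*(x2-x1) + (y3-y1)*(y2-y1) = (x2-x1)^2 + (y2-y1)^2 := by
      linarith [hqS]
    right
    constructor
    · have := mul_left_cancel₀ hvne (by linear_combination hw1 + (x2-x1) * hqS' :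
        ((x2-x1)^2 + (y2-y1)^2) * (x3 - x1) = ((x2-x1)^2 + (y2-y1)^2) * (x2 - x1))
      linarith
    · have := mul_left_cancel₀ hvne (by linear_combination hw2 + (y2-y1) * hqS' :
        ((x2-x1)^2 + (y2-y1)^2) * (y3 - y1) = ((x2-x1)^2 + (y2-y1)^2) * (y2 - y1))
      linarith

/-- Three distinct points in the plane equidistant from two points force those
two points to coincide: if `A ≠ C` and `P₁ ≠ P₂` then `P₃ ∈ {P₁, P₂}`. -/
lemma three_point {A C P₁ P₂ P₃ : ℝ × ℝ} (hAC : A ≠ C) (h12 : P₁ ≠ P₂)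
    (hA2 : sqd P₁ A = sqd P₂ A) (hA3 : sqd P₁ A = sqd P₃ A)
    (hC2 : sqd P₁ C = sqd P₂ C) (hC3 : sqd P₁ C = sqd P₃ C) :
    P₃ = P₁ ∨ P₃ = P₂ := by
  unfold sqd at hA2 hA3 hC2 hC3
  have hAC' : ¬ (A.1 = C.1 ∧ A.2 = C.2) := fun h => hAC (Prod.ext h.1 h.2)
  have h12' : ¬ (P₁.1 = P₂.1 ∧ P₁.2 = P₂.2) := fun h => h12 (Prod.ext h.1 h.2)
  rcases three_point_aux hAC' h12' hA2 hA3 hC2 hC3 with h | h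
  · exact Or.inl (Prod.ext h.1 h.2)
  · exact Or.inr (Prod.ext h.1 h.2)



/-- A set of reals in which any three elements collapse to a pair is finite. -/
lemma finite_of_pair (S : Set ℝ)
    (h : ∀ x ∈ S, ∀ y ∈ S, ∀ z ∈ S, x ≠ y → z = x ∨ z = y) : S.Finite := by
  rcases S.eq_empty_or_nonempty with hS | ⟨x, hx⟩
  · simp [hS]
  by_cases hsub : ∀ y ∈ S, y = x
  · exact Set.Finite.subset (Set.finite_singleton x) (fun z hz => hsub z hz)
  push_neg at hsub
  obtain ⟨y, hy, hyx⟩ := hsub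
  refine Set.Finite.subset (Set.toFinite {x, y}) (fun z hz => ?_)
  rcases h x hx y hy z hz (Ne.symm hyx) with h' | h' <;> simp [h']

/-- Greedy selection of a sequence avoiding finitely many bad values at each step. -/
lemma exists_seq {α : Type*} (I : Set ℝ) (hI : I.Infinite) (Good : ℝ → Prop)
    (Yf : ℝ → α)
    (hGood : {r | r ∈ I ∧ ¬ Good r}.Finite)
    (hY : ∀ c, {r | r ∈ I ∧ Yf r = c}.Finite) :
    ∃ ρ : ℕ → ℝ, ∀ j, ρ j ∈ I ∧ Good (ρ j) ∧ ∀ j' < j, Yf (ρ j) ≠ Yf (ρ j') := by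
  have hex : ∀ L : List ℝ, ∃ r, r ∈ I ∧ Good r ∧ ∀ x ∈ L, Yf r ≠ Yf x := by
    intro L
    have hbad : ({r | r ∈ I ∧ ¬ Good r} ∪ ⋃ x ∈ L, {r | r ∈ I ∧ Yf r = Yf x}).Finite := by
      refine Set.Finite.union hGood ?_
      exact Set.Finite.biUnion (L.finite_toSet) (fun x _ => hY (Yf x))
    obtain ⟨r, hrI, hrbad⟩ := (hI.diff hbad).nonempty
    refine ⟨r, hrI, ?_, ?_⟩
    · by_contra hg
      exact hrbad (Or.inl ⟨hrI, hg⟩)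
    · intro x hxL heq
      exact hrbad (Or.inr (Set.mem_biUnion hxL ⟨hrI, heq⟩))
  choose pick hpick using hex
  let aux : ℕ → List ℝ := fun j => Nat.rec [] (fun _ L => pick L :: L) j
  have haux : ∀ j, aux (j+1) = pick (aux j) :: aux j := fun j => rfl
  refine ⟨fun j => pick (aux j), fun j => ?_⟩
  obtain ⟨h1, h2, h3⟩ := hpick (aux j)
  refine ⟨h1, h2, fun j' hj' => ?_⟩
  apply h3
  -- pick (aux j') ∈ aux j for j' < j
  clear h1 h2 h3
  induction j with
  | zero => omega
  | succ k ih =>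
    rw [haux k]
    rcases Nat.lt_succ_iff_lt_or_eq.mp hj' with h | h
    · exact List.mem_cons_of_mem _ (ih h)
    · rw [h]; exact List.mem_cons_self



def pp (M d r : ℝ) : ℝ := (M^2 + d^2 - r^2) / (2*d)
def hh (M d r : ℝ) : ℝ := Real.sqrt (M^2 - (pp M d r)^2)
def XX (M d r : ℝ) : ℝ × ℝ := (pp M d r, hh M d r)
def ss (B r : ℝ) : ℝ := (r^2 + B^2 - 1) / (2*r)
def tt (B r : ℝ) : ℝ := - Real.sqrt (B^2 - (ss B r)^2)
def YY (M B d r : ℝ) : ℝ × ℝ :=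
  (d + (ss B r * (pp M d r - d) - tt B r * hh M d r) / r,
   (ss B r * hh M d r + tt B r * (pp M d r - d)) / r)

def Hyp (M B d : ℝ) : Prop :=
  0 < d ∧ 1 ≤ M ∧ 1 ≤ B ∧ B ≤ M ∧ M ≤ B + 1 ∧ d < M + B + 1

def Ivl (M B d : ℝ) : Set ℝ := Set.Ioo (max |d - M| (B - 1)) (min (d + M) (B + 1))

lemma lo_lt_hi {M B d : ℝ} (h : Hyp M B d) :
    max |d - M| (B - 1) < min (d + M) (B + 1) := by
  obtain ⟨hd, hM, hB, hBM, hMB, hdn⟩ := h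
  have habs : |d - M| < min (d + M) (B + 1) := by
    rw [lt_min_iff]
    constructor <;> (rw [abs_sub_lt_iff]; constructor <;> linarith)
  have hb : B - 1 < min (d + M) (B + 1) := by
    rw [lt_min_iff]; constructor <;> linarith
  exact max_lt habs hb

lemma facts {M B d r : ℝ} (h : Hyp M B d) (hr : r ∈ Ivl M B d) :
    0 < r ∧ (d - M)^2 < r^2 ∧ r^2 < (d + M)^2 ∧ (r - B)^2 < 1 ∧ 1 < (r + B)^2 := by
  obtain ⟨hd, hM, hB, hBM, hMB, hdn⟩ := h
  obtain ⟨hlo, hhi⟩ := hr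
  rw [max_lt_iff] at hlo
  rw [lt_min_iff] at hhi
  obtain ⟨hlo1, hlo2⟩ := hlo
  obtain ⟨hhi1, hhi2⟩ := hhi
  have habs := abs_nonneg (d - M)
  have h1 : 0 < r := lt_of_le_of_lt habs hlo1
  have h2 : (d - M)^2 < r^2 := by
    have : |d - M|^2 < r^2 := by
      apply pow_lt_pow_left₀ hlo1 habs
      norm_num
    rwa [sq_abs] at this
  refine ⟨h1, h2, ?_, ?_, ?_⟩
  · have : 0 ≤ d + M := by linarith
    nlinarith
  · nlinarith
  · nlinarith

lemma pp_eq {M B d r : ℝ} (h : Hyp M B d) : 2 * d * pp M d r = M^2 + d^2 - r^2 := by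
  have hd : d ≠ 0 := ne_of_gt h.1
  unfold pp
  field_simp

lemma hh_sq {M B d r : ℝ} (h : Hyp M B d) (hr : r ∈ Ivl M B d) :
    0 < M^2 - (pp M d r)^2 := by
  obtain ⟨h1, h2, h3, -, -⟩ := facts h hr
  have hd : (0:ℝ) < d := h.1
  have hp := pp_eq (r := r) h
  nlinarith [sq_nonneg (pp M d r)]

lemma hh_pos {M B d r : ℝ} (h : Hyp M B d) (hr : r ∈ Ivl M B d) : 0 < hh M d r :=
  Real.sqrt_pos.mpr (hh_sq h hr)

lemma hX1 {M B d r : ℝ} (h : Hyp M B d) (hr : r ∈ Ivl M B d) :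
    (pp M d r)^2 + (hh M d r)^2 = M^2 := by
  have := Real.sq_sqrt (le_of_lt (hh_sq h hr))
  unfold hh
  rw [this]; ring

lemma hX2 {M B d r : ℝ} (h : Hyp M B d) (hr : r ∈ Ivl M B d) :
    (pp M d r - d)^2 + (hh M d r)^2 = r^2 := by
  have h1 := hX1 h hr
  have h2 := pp_eq (r := r) h
  linear_combination h1 - h2

lemma ss_sq {M B d r : ℝ} (h : Hyp M B d) (hr : r ∈ Ivl M B d) :
    0 < B^2 - (ss B r)^2 := by
  obtain ⟨h1, -, -, h4, h5⟩ := facts h hr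
  have hs : 2 * r * ss B r = r^2 + B^2 - 1 := by
    unfold ss; field_simp
  nlinarith [sq_nonneg (ss B r)]

lemma tt_neg {M B d r : ℝ} (h : Hyp M B d) (hr : r ∈ Ivl M B d) : tt B r < 0 := by
  have := Real.sqrt_pos.mpr (ss_sq h hr)
  unfold tt; linarith

lemma hst {M B d r : ℝ} (h : Hyp M B d) (hr : r ∈ Ivl M B d) :
    (ss B r)^2 + (tt B r)^2 = B^2 := by
  have := Real.sq_sqrt (le_of_lt (ss_sq h hr))
  unfold tt
  rw [neg_pow, Real.sq_sqrt (le_of_lt (ss_sq h hr))]; ring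

lemma hst2 {M B d r : ℝ} (h : Hyp M B d) (hr : r ∈ Ivl M B d) :
    (ss B r - r)^2 + (tt B r)^2 = 1 := by
  have h1 := hst h hr
  have h2 : 2 * r * ss B r = r^2 + B^2 - 1 := by
    have h0 : r ≠ 0 := ne_of_gt (facts h hr).1
    unfold ss; field_simp
  linear_combination h1 - h2

lemma sqd_X_O {M B d r : ℝ} (h : Hyp M B d) (hr : r ∈ Ivl M B d) :
    ((XX M d r).1 - 0)^2 + ((XX M d r).2 - 0)^2 = M^2 := by
  have := hX1 h hr
  unfold XX
  simpa using this

lemma sqd_X_un {M B d r : ℝ} (h : Hyp M B d) (hr : r ∈ Ivl M B d) :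
    ((XX M d r).1 - d)^2 + ((XX M d r).2 - 0)^2 = r^2 := by
  have := hX2 h hr
  unfold XX
  simpa using this

lemma sqd_Y_un {M B d r : ℝ} (h : Hyp M B d) (hr : r ∈ Ivl M B d) :
    ((YY M B d r).1 - d)^2 + ((YY M B d r).2 - 0)^2 = B^2 := by
  have h1 := hX2 h hr
  have h2 := hst h hr
  have h0 : r ≠ 0 := ne_of_gt (facts h hr).1
  unfold YY
  field_simp
  linear_combination ((ss B r)^2 + (tt B r)^2) * h1 + r^2 * h2

lemma sqd_XO {M B d r : ℝ} (h : Hyp M B d) (hr : r ∈ Ivl M B d) :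
    sqd (XX M d r) (0, 0) = M^2 := by
  have := sqd_X_O h hr; unfold sqd; simpa using this

lemma sqd_Xun {M B d r : ℝ} (h : Hyp M B d) (hr : r ∈ Ivl M B d) :
    sqd (XX M d r) (d, 0) = r^2 := by
  have := sqd_X_un h hr; unfold sqd; simpa using this

lemma sqd_Yun {M B d r : ℝ} (h : Hyp M B d) (hr : r ∈ Ivl M B d) :
    sqd (YY M B d r) (d, 0) = B^2 := by
  have := sqd_Y_un h hr; unfold sqd; simpa using this

lemma sqd_XY {M B d r : ℝ} (h : Hyp M B d) (hr : r ∈ Ivl M B d) :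
    sqd (XX M d r) (YY M B d r) = 1 := by
  have h1 := hX2 h hr
  have h2 := hst2 h hr
  have h0 : r ≠ 0 := ne_of_gt (facts h hr).1
  unfold sqd XX YY
  field_simp
  linear_combination ((ss B r - r)^2 + (tt B r)^2) * h1 + r^2 * h2

lemma Y_ne_O {M B d r : ℝ} (h : Hyp M B d) (hr : r ∈ Ivl M B d) :
    YY M B d r ≠ (0, 0) := by
  intro hY
  have h0 : 0 < r := (facts h hr).1
  have hd : 0 < d := h.1
  have hhp := hh_pos h hr
  have htn := tt_neg h hr
  have h1 := hX2 h hr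
  have e1 : ss B r * (pp M d r - d) - tt B r * hh M d r = -(d * r) := by
    have := congrArg Prod.fst hY
    simp only [YY] at this
    field_simp at this
    linarith
  have e2 : ss B r * hh M d r + tt B r * (pp M d r - d) = 0 := by
    have := congrArg Prod.snd hY
    simp only [YY] at this
    field_simp at this
    linarith
  have key : tt B r * r^2 = hh M d r * d * r := by
    linear_combination (-(tt B r)) * h1 + (-(hh M d r)) * e1 + (pp M d r - d) * e2
  have l1 : tt B r * r^2 < 0 := mul_neg_of_neg_of_pos htn (by positivity)
  have l2 : 0 < hh M d r * d * r := by positivity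
  linarith

lemma X_inj {M B d : ℝ} (h : Hyp M B d) {r1 r2 : ℝ}
    (hr1 : r1 ∈ Ivl M B d) (hr2 : r2 ∈ Ivl M B d)
    (hX : XX M d r1 = XX M d r2) : r1 = r2 := by
  have e1 := sqd_Xun h hr1
  have e2 := sqd_Xun h hr2
  rw [hX] at e1
  have h1 : 0 < r1 := (facts h hr1).1
  have h2 : 0 < r2 := (facts h hr2).1
  nlinarith [e1.symm.trans e2]

lemma Yfiber_finite {M B d : ℝ} (h : Hyp M B d) (c : ℝ × ℝ) :
    {r | r ∈ Ivl M B d ∧ YY M B d r = c}.Finite := by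
  by_cases hc : c = (0, 0)
  · have : {r | r ∈ Ivl M B d ∧ YY M B d r = c} = ∅ := by
      ext r
      simp only [Set.mem_setOf_eq, Set.mem_empty_iff_false, iff_false, not_and]
      intro hr hY
      exact Y_ne_O h hr (hY.trans (by rw [hc]))
    rw [this]; exact Set.finite_empty
  apply finite_of_pair
  intro x hx y hy z hz hxy
  obtain ⟨hxI, hxY⟩ := hx
  obtain ⟨hyI, hyY⟩ := hy
  obtain ⟨hzI, hzY⟩ := hz
  have h12 : XX M d x ≠ XX M d y := fun he => hxy (X_inj h hxI hyI he)
  have hA2 : sqd (XX M d x) (0,0) = sqd (XX M d y) (0,0) := by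
    rw [sqd_XO h hxI, sqd_XO h hyI]
  have hA3 : sqd (XX M d x) (0,0) = sqd (XX M d z) (0,0) := by
    rw [sqd_XO h hxI, sqd_XO h hzI]
  have d1 : sqd (XX M d x) c = 1 := by rw [← hxY]; exact sqd_XY h hxI
  have d2 : sqd (XX M d y) c = 1 := by rw [← hyY]; exact sqd_XY h hyI
  have d3 : sqd (XX M d z) c = 1 := by rw [← hzY]; exact sqd_XY h hzI
  have hC2 : sqd (XX M d x) c = sqd (XX M d y) c := d1.trans d2.symm
  have hC3 : sqd (XX M d x) c = sqd (XX M d z) c := d1.trans d3.symm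
  have hAC : ((0 : ℝ), (0 : ℝ)) ≠ c := fun he => hc he.symm
  rcases three_point hAC h12 hA2 hA3 hC2 hC3 with h' | h'
  · exact Or.inl (X_inj h hzI hxI h')
  · exact Or.inr (X_inj h hzI hyI h')

def AP (M d c r : ℝ) : ℝ × ℝ := (c / M * (XX M d r).1, c / M * (XX M d r).2)
def BP (M B d k r : ℝ) : ℝ × ℝ :=
  (d + k / B * ((YY M B d r).1 - d), k / B * (YY M B d r).2)

lemma sqd_AP_O {M B d r : ℝ} (h : Hyp M B d) (hr : r ∈ Ivl M B d) (c : ℝ) :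
    sqd (AP M d c r) (0, 0) = c^2 := by
  have hM0 : M ≠ 0 := by have := h.2.1; intro he; linarith
  have hx := sqd_X_O h hr
  simp only [sub_zero] at hx
  unfold sqd AP
  simp only [sub_zero]
  field_simp
  linear_combination c^2 * hx

lemma sqd_BP_un {M B d r : ℝ} (h : Hyp M B d) (hr : r ∈ Ivl M B d) (k : ℝ) :
    sqd (BP M B d k r) (d, 0) = k^2 := by
  have hB0 : B ≠ 0 := by have := h.2.2.1; intro he; linarith
  have hy := sqd_Y_un h hr
  simp only [sub_zero] at hy
  unfold sqd BP
  simp only [sub_zero, add_sub_cancel_left]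
  field_simp
  linear_combination k^2 * hy

lemma AP_inj {M B d : ℝ} (h : Hyp M B d) {c r1 r2 : ℝ} (hc : c ≠ 0)
    (hr1 : r1 ∈ Ivl M B d) (hr2 : r2 ∈ Ivl M B d)
    (he : AP M d c r1 = AP M d c r2) : r1 = r2 := by
  have hM0 : M ≠ 0 := by have := h.2.1; intro hx; linarith
  have hcM : c / M ≠ 0 := div_ne_zero hc hM0
  apply X_inj h hr1 hr2
  have h1 := congrArg Prod.fst he
  have h2 := congrArg Prod.snd he
  simp only [AP] at h1 h2
  exact Prod.ext (mul_left_cancel₀ hcM h1) (mul_left_cancel₀ hcM h2)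

lemma bad_finite {M B d : ℝ} (h : Hyp M B d) (c k : ℝ) (hc : 0 ≤ c) (hk : 0 ≤ k) :
    {r | r ∈ Ivl M B d ∧ AP M d c r = BP M B d k r}.Finite := by
  have hd : 0 < d := h.1
  have hM : (0:ℝ) < M := by have := h.2.1; linarith
  have hB : (0:ℝ) < B := by have := h.2.2.1; linarith
  rcases eq_or_lt_of_le hk with hk0 | hkpos
  · -- k = 0 : BP = (d, 0), impossible
    have hempty : {r | r ∈ Ivl M B d ∧ AP M d c r = BP M B d k r} = ∅ := by
      ext r
      simp only [Set.mem_setOf_eq, Set.mem_empty_iff_false, iff_false, not_and]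
      intro hr he
      have h1 := congrArg Prod.fst he
      have h2 := congrArg Prod.snd he
      simp only [AP, BP, ← hk0] at h1 h2
      rcases eq_or_lt_of_le hc with hc0 | hcpos
      · rw [← hc0] at h1
        simp at h1
        linarith
      · have hhp := hh_pos h hr
        have hX2' : (XX M d r).2 = hh M d r := rfl
        have hpos : c / M * (XX M d r).2 > 0 := by
          rw [hX2']; exact mul_pos (div_pos hcpos hM) hhp
        simp only [zero_div, zero_mul] at h2
        linarith
    rw [hempty]; exact Set.finite_empty
  rcases eq_or_lt_of_le hc with hc0 | hcpos
  · -- c = 0 : forces YY r to be a fixed point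
    apply Set.Finite.subset (Yfiber_finite h (d - d * B / k, 0))
    intro r hr
    obtain ⟨hrI, he⟩ := hr
    refine ⟨hrI, ?_⟩
    have h1 := congrArg Prod.fst he
    have h2 := congrArg Prod.snd he
    simp only [AP, BP, ← hc0] at h1 h2
    have hk0' : k ≠ 0 := ne_of_gt hkpos
    have hB0 : B ≠ 0 := ne_of_gt hB
    apply Prod.ext
    · simp only []
      field_simp at h1 ⊢
      have h1' : d * B + k * ((YY M B d r).1 - d) = 0 := by
        rcases mul_eq_zero.mp (by linarith [h1] : M * (d * B + k * ((YY M B d r).1 - d)) = 0) with h | h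
        · exact absurd h (ne_of_gt hM)
        · exact h
      linarith
    · simp only []
      field_simp at h2
      have h2' : (M * k) * (YY M B d r).2 = 0 := by linarith [h2]
      rcases mul_eq_zero.mp h2' with h2 | h2
      · exact absurd h2 (mul_ne_zero (ne_of_gt hM) hk0')
      · exact h2
  · -- c > 0, k > 0 : at most two bad parameters
    apply finite_of_pair
    intro x hx y hy z hz hxy
    obtain ⟨hxI, hxe⟩ := hx
    obtain ⟨hyI, hye⟩ := hy
    obtain ⟨hzI, hze⟩ := hz
    have hc0 : c ≠ 0 := ne_of_gt hcpos
    have h12 : AP M d c x ≠ AP M d c y := fun he => hxy (AP_inj h hc0 hxI hyI he)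
    have hAC : ((0:ℝ), (0:ℝ)) ≠ ((d:ℝ), (0:ℝ)) := by
      intro he
      have := congrArg Prod.fst he
      simp at this
      linarith
    have hA2 : sqd (AP M d c x) (0,0) = sqd (AP M d c y) (0,0) := by
      rw [sqd_AP_O h hxI, sqd_AP_O h hyI]
    have hA3 : sqd (AP M d c x) (0,0) = sqd (AP M d c z) (0,0) := by
      rw [sqd_AP_O h hxI, sqd_AP_O h hzI]
    have e1 : sqd (AP M d c x) (d,0) = k^2 := by rw [hxe]; exact sqd_BP_un h hxI k
    have e2 : sqd (AP M d c y) (d,0) = k^2 := by rw [hye]; exact sqd_BP_un h hyI k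
    have e3 : sqd (AP M d c z) (d,0) = k^2 := by rw [hze]; exact sqd_BP_un h hzI k
    rcases three_point hAC h12 hA2 hA3 (e1.trans e2.symm) (e1.trans e3.symm) with h' | h'
    · exact Or.inl (AP_inj h hc0 hzI hxI h')
    · exact Or.inr (AP_inj h hc0 hzI hyI h')

def Phi (u0 e1 e2 : EuclideanSpace ℝ (Fin 2)) (P : ℝ × ℝ) : EuclideanSpace ℝ (Fin 2) :=
  u0 + P.1 • e1 + P.2 • e2

lemma dist_Phi (u0 e1 e2 : EuclideanSpace ℝ (Fin 2))
    (hnorm : (e1 0)^2 + (e1 1)^2 = 1)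
    (he2a : e2 0 = -(e1 1)) (he2b : e2 1 = e1 0) (P Q : ℝ × ℝ) :
    dist (Phi u0 e1 e2 P) (Phi u0 e1 e2 Q) = Real.sqrt (sqd P Q) := by
  rw [dist_eq_norm]
  have hz : Phi u0 e1 e2 P - Phi u0 e1 e2 Q
      = (P.1 - Q.1) • e1 + (P.2 - Q.2) • e2 := by
    unfold Phi
    rw [sub_smul, sub_smul]
    abel
  rw [hz, EuclideanSpace.norm_eq]
  congr 1
  rw [Fin.sum_univ_two]
  simp only [PiLp.add_apply, PiLp.smul_apply, smul_eq_mul, he2a, he2b,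
    Real.norm_eq_abs, sq_abs]
  unfold sqd
  linear_combination ((P.1 - Q.1)^2 + (P.2 - Q.2)^2) * hnorm

lemma Phi_inj (u0 e1 e2 : EuclideanSpace ℝ (Fin 2))
    (hnorm : (e1 0)^2 + (e1 1)^2 = 1)
    (he2a : e2 0 = -(e1 1)) (he2b : e2 1 = e1 0) {P Q : ℝ × ℝ}
    (h : Phi u0 e1 e2 P = Phi u0 e1 e2 Q) : P = Q := by
  have hd := dist_Phi u0 e1 e2 hnorm he2a he2b P Q
  rw [h, dist_self] at hd
  have hs : sqd P Q ≤ 0 := by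
    by_contra hpos
    push_neg at hpos
    have := Real.sqrt_pos.mpr hpos
    linarith
  have hs' : (0:ℝ) ≤ sqd P Q := by unfold sqd; positivity
  exact sqd_eq_zero (le_antisymm hs hs')

lemma sqd_comm (P Q : ℝ × ℝ) : sqd P Q = sqd Q P := by unfold sqd; ring

lemma BP_det {M B d : ℝ} (hB0 : B ≠ 0) {k r1 r2 : ℝ} (hk : k ≠ 0)
    (he : BP M B d k r1 = BP M B d k r2) : YY M B d r1 = YY M B d r2 := by
  have hkB : k / B ≠ 0 := div_ne_zero hk hB0
  have h1 := congrArg Prod.fst he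
  have h2 := congrArg Prod.snd he
  simp only [BP, add_right_inj] at h1
  simp only [BP] at h2
  have e1 : (YY M B d r1).1 = (YY M B d r2).1 := by
    have := mul_left_cancel₀ hkB h1
    linarith
  have e2 : (YY M B d r1).2 = (YY M B d r2).2 := mul_left_cancel₀ hkB h2
  exact Prod.ext e1 e2

lemma sqd_AP_AP {M B d r : ℝ} (h : Hyp M B d) (hr : r ∈ Ivl M B d) (c c' : ℝ) :
    sqd (AP M d c r) (AP M d c' r) = (c - c')^2 := by
  have hM0 : M ≠ 0 := by have := h.2.1; intro he; linarith
  have hx := sqd_X_O h hr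
  simp only [sub_zero] at hx
  unfold sqd AP
  field_simp
  linear_combination (c - c')^2 * hx

lemma sqd_BP_BP {M B d r : ℝ} (h : Hyp M B d) (hr : r ∈ Ivl M B d) (k k' : ℝ) :
    sqd (BP M B d k r) (BP M B d k' r) = (k - k')^2 := by
  have hB0 : B ≠ 0 := by have := h.2.2.1; intro he; linarith
  have hy := sqd_Y_un h hr
  simp only [sub_zero] at hy
  unfold sqd BP
  field_simp
  linear_combination (k - k')^2 * hy

lemma AP_top {M B d r : ℝ} (h : Hyp M B d) : AP M d M r = XX M d r := by
  have hM0 : M ≠ 0 := by have := h.2.1; intro he; linarith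
  unfold AP
  rw [div_self hM0, one_mul, one_mul]

lemma BP_top {M B d r : ℝ} (h : Hyp M B d) : BP M B d B r = YY M B d r := by
  have hB0 : B ≠ 0 := by have := h.2.2.1; intro he; linarith
  unfold BP
  rw [div_self hB0, one_mul, one_mul]
  apply Prod.ext <;> simp

end
end UPaths

open UPaths

set_option maxHeartbeats 1600000

/-- For `n ≥ 3` and prescribed endpoints with `0 < dist u₀ uₙ < n`, there are
infinitely many injective unit-distance path realizations `u₀, …, uₙ`
(parametrized below by `j : ℕ`, with the interior points differing across
realizations), such that moreover `|u₀ uᵢ| = i` for `i ≤ ⌊n/2⌋` and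
`|uₙ uᵢ| = n − i` for `⌊n/2⌋ < i ≤ n`. -/
theorem infinitely_many_unit_paths (n : ℕ) (hn : 3 ≤ n)
    (u0 un : EuclideanSpace ℝ (Fin 2))
    (h0 : 0 < dist u0 un) (h1 : dist u0 un < n) :
    ∃ f : ℕ → ℕ → EuclideanSpace ℝ (Fin 2),
      (∀ j, f j 0 = u0 ∧ f j n = un) ∧
      (∀ j, ∀ i < n, dist (f j i) (f j (i + 1)) = 1) ∧
      (∀ j, ∀ i i', i ≤ n → i' ≤ n → i ≠ i' → f j i ≠ f j i') ∧
      (∀ j j', j ≠ j' → ∀ i, 1 ≤ i → i ≤ n - 1 → f j i ≠ f j' i) ∧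
      (∀ j, ∀ i ≤ n / 2, dist u0 (f j i) = (i : ℝ)) ∧
      (∀ j, ∀ i, n / 2 < i → i ≤ n → dist un (f j i) = (n : ℝ) - (i : ℝ)) := by
  classical
  set d : ℝ := dist u0 un with hd_def
  set m : ℕ := n / 2 with hm_def
  set b : ℕ := n - 1 - m with hb_def
  have hm1 : 1 ≤ m := by omega
  have hb1 : 1 ≤ b := by omega
  have hbm : b ≤ m := by omega
  have hmb : m ≤ b + 1 := by omega
  have hmbn : m + b + 1 = n := by omega
  have hmn : m < n := by omega
  have hMne : ((m:ℕ):ℝ) ≠ 0 := Nat.cast_ne_zero.mpr (by omega)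
  have hBne : ((b:ℕ):ℝ) ≠ 0 := Nat.cast_ne_zero.mpr (by omega)
  have hHyp : Hyp (m:ℝ) (b:ℝ) d := by
    refine ⟨h0, ?_, ?_, ?_, ?_, ?_⟩
    · exact_mod_cast hm1
    · exact_mod_cast hb1
    · exact_mod_cast hbm
    · exact_mod_cast hmb
    · have hcast : ((m:ℝ)) + (b:ℝ) + 1 = (n:ℝ) := by exact_mod_cast hmbn
      rw [hcast]; exact h1
  have hdne : d ≠ 0 := ne_of_gt h0
  set e1 : EuclideanSpace ℝ (Fin 2) := d⁻¹ • (un - u0) with he1_def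
  have he1norm : ‖e1‖ = 1 := by
    rw [he1_def, norm_smul, norm_inv, Real.norm_eq_abs, abs_of_pos h0]
    have hnu : ‖un - u0‖ = d := by rw [hd_def, dist_comm, dist_eq_norm]
    rw [hnu]
    field_simp
  have hnorm : (e1 0)^2 + (e1 1)^2 = 1 := by
    have h2 : ‖e1‖^2 = 1 := by rw [he1norm]; norm_num
    rw [EuclideanSpace.norm_eq, Real.sq_sqrt (by positivity)] at h2
    rw [Fin.sum_univ_two, Real.norm_eq_abs, Real.norm_eq_abs, sq_abs, sq_abs] at h2
    exact h2
  set e2 : EuclideanSpace ℝ (Fin 2) := (WithLp.equiv 2 (Fin 2 → ℝ)).symm ![-(e1 1), e1 0]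
    with he2_def
  have he2a : e2 0 = -(e1 1) := rfl
  have he2b : e2 1 = e1 0 := rfl
  have hdist := dist_Phi u0 e1 e2 hnorm he2a he2b
  have hPhiInj : ∀ {P Q : ℝ × ℝ}, Phi u0 e1 e2 P = Phi u0 e1 e2 Q → P = Q :=
    fun h => Phi_inj u0 e1 e2 hnorm he2a he2b h
  have hPhi0 : Phi u0 e1 e2 (0, 0) = u0 := by
    unfold Phi; simp
  have hPhid : Phi u0 e1 e2 (d, 0) = un := by
    unfold Phi
    rw [he1_def, smul_smul, mul_inv_cancel₀ hdne, one_smul]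
    simp
  -- greedy selection of parameters
  set I : Set ℝ := Ivl (m:ℝ) (b:ℝ) d with hI_def
  have hIinf : I.Infinite := Set.infinite_coe_iff.mp (Set.Ioo.infinite (lo_lt_hi hHyp))
  set Good : ℝ → Prop := fun r => ∀ i : ℕ, i ≤ m → ∀ k : ℕ, k ≤ b →
      AP (m:ℝ) d (i:ℝ) r ≠ BP (m:ℝ) (b:ℝ) d (k:ℝ) r with hGood_def
  have hGoodfin : {r | r ∈ I ∧ ¬ Good r}.Finite := by
    have hsub : {r | r ∈ I ∧ ¬ Good r} ⊆
        ⋃ i ∈ Finset.range (m+1), ⋃ k ∈ Finset.range (b+1),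
          {r | r ∈ I ∧ AP (m:ℝ) d (i:ℝ) r = BP (m:ℝ) (b:ℝ) d (k:ℝ) r} := by
      intro r hr
      obtain ⟨hrI, hng⟩ := hr
      simp only [hGood_def] at hng
      push_neg at hng
      obtain ⟨i, hi, k, hk, heq⟩ := hng
      simp only [Set.mem_iUnion, Set.mem_setOf_eq, exists_prop]
      exact ⟨i, Finset.mem_range.mpr (by omega), k, Finset.mem_range.mpr (by omega), hrI, heq⟩
    refine Set.Finite.subset ?_ hsub
    refine Set.Finite.biUnion (Finset.range (m+1)).finite_toSet (fun i _ => ?_)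
    refine Set.Finite.biUnion (Finset.range (b+1)).finite_toSet (fun k _ => ?_)
    exact bad_finite hHyp _ _ (Nat.cast_nonneg i) (Nat.cast_nonneg k)
  obtain ⟨ρ, hρ⟩ := exists_seq I hIinf Good (fun r => YY (m:ℝ) (b:ℝ) d r) hGoodfin
      (fun c => Yfiber_finite hHyp c)
  have hrI : ∀ j, ρ j ∈ I := fun j => (hρ j).1
  have hrGood : ∀ j, Good (ρ j) := fun j => (hρ j).2.1
  set g : ℝ → ℕ → ℝ × ℝ := fun r i =>
    if i ≤ m then AP (m:ℝ) d (i:ℝ) r else BP (m:ℝ) (b:ℝ) d ((n - i : ℕ):ℝ) r with hg_def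
  have hgA : ∀ r i, i ≤ m → g r i = AP (m:ℝ) d (i:ℝ) r := by
    intro r i hi; simp only [hg_def]; rw [if_pos hi]
  have hgB : ∀ r i, m < i → g r i = BP (m:ℝ) (b:ℝ) d ((n - i : ℕ):ℝ) r := by
    intro r i hi; simp only [hg_def]; rw [if_neg (by omega)]
  have hg0 : ∀ r, g r 0 = (0, 0) := by
    intro r
    rw [hgA r 0 (Nat.zero_le m)]
    unfold AP
    norm_num
  have hgn : ∀ r, g r n = (d, 0) := by
    intro r
    rw [hgB r n hmn]
    unfold BP
    simp
  have hdist0 : ∀ j i, i ≤ m → dist u0 (Phi u0 e1 e2 (g (ρ j) i)) = (i:ℝ) := by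
    intro j i hi
    nth_rewrite 1 [← hPhi0]
    rw [hdist, hgA _ i hi, sqd_comm, sqd_AP_O hHyp (hrI j)]
    exact Real.sqrt_sq (Nat.cast_nonneg i)
  have hdistn : ∀ j i, m < i → dist un (Phi u0 e1 e2 (g (ρ j) i)) = ((n - i:ℕ):ℝ) := by
    intro j i hi
    rw [← hPhid, hdist, hgB _ i hi, sqd_comm, sqd_BP_un hHyp (hrI j)]
    exact Real.sqrt_sq (Nat.cast_nonneg _)
  refine ⟨fun j i => Phi u0 e1 e2 (g (ρ j) i), ?_, ?_, ?_, ?_, ?_, ?_⟩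
  · -- endpoints
    intro j
    constructor
    · show Phi u0 e1 e2 (g (ρ j) 0) = u0
      rw [hg0]; exact hPhi0
    · show Phi u0 e1 e2 (g (ρ j) n) = un
      rw [hgn]; exact hPhid
  · -- unit consecutive distances
    intro j i hi
    show dist (Phi u0 e1 e2 (g (ρ j) i)) (Phi u0 e1 e2 (g (ρ j) (i + 1))) = 1
    by_cases hA : i + 1 ≤ m
    · rw [hgA _ i (by omega), hgA _ (i+1) hA, hdist, sqd_AP_AP hHyp (hrI j)]
      have hcast : ((i:ℝ) - ((i+1:ℕ):ℝ))^2 = 1 := by push_cast; ring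
      rw [hcast]; exact Real.sqrt_one
    · by_cases hB : i ≤ m
      · -- junction i = m
        have him : i = m := by omega
        have hk : n - (i+1) = b := by omega
        rw [hgA _ i hB, hgB _ (i+1) (by omega), hk, him, AP_top hHyp, BP_top hHyp,
          hdist, sqd_XY hHyp (hrI j)]
        exact Real.sqrt_one
      · have hi' : m < i := by omega
        rw [hgB _ i hi', hgB _ (i+1) (by omega), hdist, sqd_BP_BP hHyp (hrI j)]
        have hsplit : n - i = (n - (i+1)) + 1 := by omega
        have hcast : (((n - i:ℕ)):ℝ) - ((n - (i+1):ℕ):ℝ) = 1 := by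
          rw [hsplit]; push_cast; ring
        rw [hcast]; norm_num
  · -- injectivity within one path
    intro j i i' hi hi' hne heq
    have heq' : Phi u0 e1 e2 (g (ρ j) i) = Phi u0 e1 e2 (g (ρ j) i') := heq
    have hg' := hPhiInj heq'
    by_cases h2 : i ≤ m <;> by_cases h3 : i' ≤ m
    · have hcast : (i:ℝ) = (i':ℝ) := by
        rw [← hdist0 j i h2, ← hdist0 j i' h3, heq']
      exact hne (Nat.cast_injective hcast)
    · rw [hgA _ i h2, hgB _ i' (by omega)] at hg'
      exact hrGood j i h2 (n - i') (by omega) hg'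
    · rw [hgB _ i (by omega), hgA _ i' h3] at hg'
      exact hrGood j i' h3 (n - i) (by omega) hg'.symm
    · have hcast : ((n - i:ℕ):ℝ) = ((n - i':ℕ):ℝ) := by
        rw [← hdistn j i (by omega), ← hdistn j i' (by omega), heq']
      have : n - i = n - i' := Nat.cast_injective hcast
      omega
  · -- distinct across the family
    intro j j' hjj i hi1 hi2 heq
    have heq' : Phi u0 e1 e2 (g (ρ j) i) = Phi u0 e1 e2 (g (ρ j') i) := heq
    have hYne : YY (m:ℝ) (b:ℝ) d (ρ j) ≠ YY (m:ℝ) (b:ℝ) d (ρ j') := by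
      rcases Nat.lt_or_ge j j' with h | h
      · exact ((hρ j').2.2 j h).symm
      · exact (hρ j).2.2 j' (by omega)
    have hrne : ρ j ≠ ρ j' := fun he => hYne (by rw [he])
    have hg' := hPhiInj heq'
    by_cases h2 : i ≤ m
    · rw [hgA _ i h2, hgA _ i h2] at hg'
      exact hrne (AP_inj hHyp (Nat.cast_ne_zero.mpr (by omega)) (hrI j) (hrI j') hg')
    · rw [hgB _ i (by omega), hgB _ i (by omega)] at hg'
      exact hYne (BP_det hBne (Nat.cast_ne_zero.mpr (by omega)) hg')
  · -- distances from u0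
    intro j i hi
    exact hdist0 j i hi
  · -- distances from un
    intro j i hi hin
    show dist un (Phi u0 e1 e2 (g (ρ j) i)) = (n : ℝ) - (i : ℝ)
    rw [hdistn j i hi, Nat.cast_sub hin]
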